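/- For all integers k, n ≥ 1 and every integer c with c·ℓ ≡ 1 (mod p^n), the field norm from ℚ(μ_{ℓ^k p^n}) to ℚ(μ_{p^n}) of the element 1 − ζ_{ℓ^k p^n} equals (1 − ζ_{p^n}) · (1 − ζ_{p^n}^c)^{−1}. -/

import Mathlib

open Complex

/-- `ζ_N = exp(2πi/N)`. -/
noncomputable def zeta (N : ℕ) : ℂ := Complex.exp (2 * Real.pi * Complex.I / N)

/-- The `N`-th cyclotomic field `ℚ(μ_N) ⊆ ℂ`. -/
noncomputable def Qmu (N : ℕ) : IntermediateField ℚ ℂ :=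
  IntermediateField.adjoin ℚ {zeta N}

/-- `ζ_N` as an element of `ℚ(μ_N)`. -/
noncomputable def zetaQ (N : ℕ) : Qmu N :=
  ⟨zeta N, IntermediateField.subset_adjoin ℚ {zeta N} rfl⟩


lemma zeta_ne_zero (N : ℕ) : zeta N ≠ 0 := Complex.exp_ne_zero _

lemma zeta_pow_mul (a b : ℕ) (ha : a ≠ 0) (hb : b ≠ 0) : zeta (a * b) ^ a = zeta b := by
  rw [zeta, zeta, ← Complex.exp_nat_mul]
  congr 1
  have ha' : (a : ℂ) ≠ 0 := Nat.cast_ne_zero.mpr ha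
  have hb' : (b : ℂ) ≠ 0 := Nat.cast_ne_zero.mpr hb
  push_cast
  field_simp

lemma zeta_prim (N : ℕ) (h : N ≠ 0) : IsPrimitiveRoot (zeta N) N :=
  Complex.isPrimitiveRoot_exp N h

open Polynomial in
set_option maxHeartbeats 2000000 in
set_option synthInstance.maxHeartbeats 400000 in
theorem stmt3
    -- `p` and `ℓ` are distinct primes with `p` odd
    (p ℓ : ℕ) (hp : p.Prime) (hl : ℓ.Prime) (hpl : p ≠ ℓ) (hodd : Odd p)
    (k n : ℕ) (hk : 1 ≤ k) (hn : 1 ≤ n)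
    -- `c` an integer with `c·ℓ ≡ 1 (mod p^n)`
    (c : ℤ) (hc : c * ℓ ≡ 1 [ZMOD (p : ℤ) ^ n])
    -- `ζ_{ℓ^k p^n}` as an element of `ℚ(μ_{ℓ^k p^n}) = ℚ(μ_{p^n})(ζ_{ℓ^k p^n})`
    (ζbig : IntermediateField.adjoin ↥(Qmu (p ^ n)) {zeta (ℓ ^ k * p ^ n)})
    (hζbig : (ζbig : ℂ) = zeta (ℓ ^ k * p ^ n)) :
    -- the field norm of `1 - ζ_{ℓ^k p^n}` down to `ℚ(μ_{p^n})`
    Algebra.norm ↥(Qmu (p ^ n)) (1 - ζbig)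
      = (1 - zetaQ (p ^ n)) * (1 - zetaQ (p ^ n) ^ c)⁻¹ := by
  revert ζbig
  have hppos : 0 < p := hp.pos
  have hlpos : 0 < ℓ := hl.pos
  have hpn : p ^ n ≠ 0 := (pow_pos hppos n).ne'
  have hlk : ℓ ^ k ≠ 0 := (pow_pos hlpos k).ne'
  set N := ℓ ^ k * p ^ n with hN
  have hNne : N ≠ 0 := mul_ne_zero hlk hpn
  set E : IntermediateField ℚ ℂ := Qmu (p ^ n) with hE
  set K : IntermediateField ↥E ℂ := IntermediateField.adjoin ↥E {zeta N} with hK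
  set ζQ : ↥E := zetaQ (p ^ n) with hζQ
  set β : ↥E := ζQ ^ c with hβ
  intro ζbig hζbig
  -- basic root facts
  have hprimP : IsPrimitiveRoot (zeta (p ^ n)) (p ^ n) := zeta_prim _ hpn
  have hprimN : IsPrimitiveRoot (zeta N) N := zeta_prim _ hNne
  have hζQc : (ζQ : ℂ) = zeta (p ^ n) := rfl
  have hζQpow : ζQ ^ (p ^ n) = 1 := by
    apply Subtype.ext
    push_cast [hζQc]
    exact hprimP.pow_eq_one
  -- β ^ ℓ = ζQ
  obtain ⟨m, hm⟩ : ∃ m : ℤ, c * ℓ = 1 + (p : ℤ) ^ n * m := by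
    have := (Int.ModEq.dvd hc)
    obtain ⟨m, hm⟩ := this
    exact ⟨-m, by linarith⟩
  have hζQne : ζQ ≠ 0 := by
    intro h0
    apply zeta_ne_zero (p ^ n)
    rw [← hζQc, h0]; rfl
  have hβl : β ^ ℓ = ζQ := by
    rw [hβ, ← zpow_natCast (ζQ ^ c) ℓ, ← zpow_mul, hm, zpow_add₀ hζQne, zpow_one,
      show (p:ℤ)^n * m = ((p^n : ℕ) : ℤ) * m by push_cast; ring, zpow_mul,
      zpow_natCast, hζQpow, one_zpow, mul_one]
  -- the candidate minimal polynomial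
  set g : Polynomial ↥E :=
    ∑ i ∈ Finset.range ℓ, (X ^ (ℓ ^ (k-1))) ^ i * (C β) ^ (ℓ - 1 - i) with hg
  have hlkk : ℓ ^ (k-1) * ℓ = ℓ ^ k := by
    rw [← pow_succ]
    congr 1
    omega
  have hgmul : g * (X ^ (ℓ ^ (k-1)) - C β) = X ^ (ℓ ^ k) - C ζQ := by
    rw [hg, geom_sum₂_mul, ← pow_mul, hlkk, ← C_pow, hβl]
  have hmonic2 : (X ^ (ℓ ^ (k-1)) - C β).Monic :=
    monic_X_pow_sub_C β (pow_ne_zero _ hlpos.ne')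
  have hmonicB : (X ^ (ℓ ^ k) - C ζQ).Monic :=
    monic_X_pow_sub_C ζQ hlk
  have hgmonic : g.Monic := hmonic2.of_mul_monic_left (by rwa [mul_comm _ g, hgmul])
  have hdeg2 : (X ^ (ℓ ^ (k-1)) - C β).natDegree = ℓ ^ (k-1) := natDegree_X_pow_sub_C
  have hdegB : (X ^ (ℓ ^ k) - C ζQ).natDegree = ℓ ^ k := natDegree_X_pow_sub_C
  have hgdeg : g.natDegree = ℓ ^ k - ℓ ^ (k-1) := by
    have := hgmonic.natDegree_mul hmonic2
    rw [hgmul, hdegB, hdeg2] at this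
    omega
  -- complex computations
  have hζpow1 : zeta N ^ (ℓ ^ k) = zeta (p ^ n) := zeta_pow_mul _ _ hlk hpn
  have hζpow2 : zeta N ^ (ℓ ^ (k-1)) = zeta (ℓ * p ^ n) := by
    have hNalt : N = ℓ ^ (k-1) * (ℓ * p ^ n) := by rw [hN, ← mul_assoc, hlkk]
    rw [hNalt]
    exact zeta_pow_mul _ _ (pow_ne_zero _ hlpos.ne') (mul_ne_zero hlpos.ne' hpn)
  have hβc : (β : ℂ) = zeta (p ^ n) ^ c := by
    rw [hβ, ← hζQc]
    exact map_zpow₀ (algebraMap ↥E ℂ) ζQ c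
  have hne : zeta (ℓ * p ^ n) ≠ (β : ℂ) := by
    intro h
    have h1 : zeta (ℓ * p ^ n) ^ (p ^ n) = zeta ℓ := by
      rw [mul_comm ℓ (p ^ n)]
      exact zeta_pow_mul _ _ hpn hlpos.ne'
    have h2 : ((β : ℂ)) ^ (p ^ n) = 1 := by
      rw [hβc, ← zpow_natCast (zeta (p ^ n) ^ c), ← zpow_mul, mul_comm, zpow_mul,
        zpow_natCast, hprimP.pow_eq_one, one_zpow]
    rw [h, h2] at h1
    exact (zeta_prim ℓ hlpos.ne').ne_one hl.one_lt h1.symm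
  have halg : ∀ x : ↥E, algebraMap ↥E ℂ x = ↑x := fun x => rfl
  have haeval2 : (Polynomial.aeval (zeta N)) (X ^ (ℓ ^ (k-1)) - C β) ≠ 0 := by
    simp only [map_sub, aeval_X_pow, aeval_C, halg]
    rw [hζpow2]
    intro h0
    exact hne (sub_eq_zero.mp h0)
  have haevalg : (Polynomial.aeval (zeta N)) g = 0 := by
    have h0 := congrArg (Polynomial.aeval (zeta N)) hgmul
    simp only [map_mul, map_sub, aeval_X_pow, aeval_C, halg] at h0
    rw [hζpow1, hζQc, sub_self] at h0
    rcases mul_eq_zero.mp h0 with h | h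
    · exact h
    · exact absurd h (by simpa only [map_sub, aeval_X_pow, aeval_C, halg] using haeval2)
  have hint : IsIntegral ↥E (zeta N) := ⟨g, hgmonic, by rwa [← aeval_def]⟩
  -- degrees over ℚ
  have hintQ : ∀ M : ℕ, M ≠ 0 → IsIntegral ℚ (zeta M) := by
    intro M hM
    refine ⟨X ^ M - C 1, monic_X_pow_sub_C 1 hM, ?_⟩
    simp [eval₂_sub, eval₂_X_pow, (zeta_prim M hM).pow_eq_one]
  have hQdeg : ∀ M : ℕ, M ≠ 0 →
      Module.finrank ℚ ↥(Qmu M) = Nat.totient M := by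
    intro M hM
    show Module.finrank ℚ ↥(IntermediateField.adjoin ℚ {zeta M}) = Nat.totient M
    rw [IntermediateField.adjoin.finrank (hintQ M hM),
      ← cyclotomic_eq_minpoly_rat (zeta_prim M hM) (Nat.pos_of_ne_zero hM),
      natDegree_cyclotomic]
  have hPleN : Qmu (p ^ n) ≤ Qmu N := by
    have hmem : zeta N ∈ Qmu N := IntermediateField.subset_adjoin ℚ {zeta N} rfl
    have : zeta (p ^ n) ∈ Qmu N := by
      rw [← hζpow1]
      exact pow_mem hmem _
    rw [show Qmu (p ^ n) = IntermediateField.adjoin ℚ {zeta (p ^ n)} from rfl,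
      IntermediateField.adjoin_le_iff]
    simpa using this
  have hrs : IntermediateField.restrictScalars ℚ K = Qmu N := by
    erw [hK, IntermediateField.restrictScalars_adjoin]
    apply le_antisymm
    · rw [IntermediateField.adjoin_le_iff]
      rintro x (hx | hx)
      · exact hPleN hx
      · rw [Set.mem_singleton_iff] at hx
        rw [hx]
        exact IntermediateField.subset_adjoin ℚ _ rfl
    · exact IntermediateField.adjoin.mono ℚ _ _ Set.subset_union_right
  have hfinKQ : Module.finrank ℚ ↥K = Nat.totient N := by
    have : Module.finrank ℚ ↥(IntermediateField.restrictScalars ℚ K) = Nat.totient N := by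
      rw [hrs, hQdeg N hNne]
    exact this
  haveI hfd : FiniteDimensional ↥E ↥K := IntermediateField.adjoin.finiteDimensional hint
  have htower : Module.finrank ℚ ↥E * Module.finrank ↥E ↥K = Nat.totient N := by
    rw [Module.finrank_mul_finrank ℚ ↥E ↥K, hfinKQ]
  have hco : Nat.Coprime (ℓ ^ k) (p ^ n) :=
    Nat.Coprime.pow k n ((Nat.coprime_primes hl hp).mpr (fun h => hpl h.symm))
  have hfinK : Module.finrank ↥E ↥K = Nat.totient (ℓ ^ k) := by
    have h1 : Nat.totient N = Nat.totient (ℓ ^ k) * Nat.totient (p ^ n) := by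
      rw [hN, Nat.totient_mul hco]
    have hP0 : 0 < Nat.totient (p ^ n) := Nat.totient_pos.mpr (pow_pos hppos n)
    have h2 : Module.finrank ℚ ↥E = Nat.totient (p ^ n) := hQdeg (p ^ n) hpn
    apply Nat.eq_of_mul_eq_mul_left hP0
    rw [← h2, htower, h1, h2]
    ring
  have hltot : Nat.totient (ℓ ^ k) = ℓ ^ k - ℓ ^ (k-1) := by
    rw [Nat.totient_prime_pow hl (by omega : 0 < k), Nat.mul_sub, mul_one, hlkk]
  have hdm : (minpoly ↥E (zeta N)).natDegree = Nat.totient (ℓ ^ k) := by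
    rw [← IntermediateField.adjoin.finrank hint, ← hK, hfinK]
  have hminζ : minpoly ↥E (zeta N) = g := by
    obtain ⟨q, hq⟩ := minpoly.dvd ↥E (zeta N) haevalg
    have hmono : (minpoly ↥E (zeta N)).Monic := minpoly.monic hint
    have hgd : g.natDegree = Nat.totient (ℓ ^ k) := by rw [hgdeg, hltot]
    have hqm : q.Monic := hmono.of_mul_monic_left (by rwa [← hq])
    have hdm2 := hmono.natDegree_mul hqm
    rw [← hq, hgd, hdm] at hdm2
    have hq1 : q = 1 := hqm.natDegree_eq_zero.mp (by omega)
    rw [hq, hq1, mul_one]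
  -- separability and integrality
  haveI : CharZero ↥E := charZero_of_injective_algebraMap (algebraMap ℚ ↥E).injective
  haveI : Algebra.IsAlgebraic ↥E ↥K := Algebra.IsAlgebraic.of_finite _ _
  haveI : Algebra.IsSeparable ↥E ↥K := inferInstance
  have hζint : IsIntegral ↥E ζbig := IsIntegral.of_finite _ _
  have hgd : g.natDegree = Nat.totient (ℓ ^ k) := by rw [hgdeg, hltot]
  have halgK : (algebraMap ↥K ℂ) ζbig = (ζbig : ℂ) := rfl
  have hminbig : minpoly ↥E ζbig = g := by
    rw [← minpoly.algebraMap_eq (algebraMap ↥K ℂ).injective ζbig, halgK, hζbig, hminζ]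
  set θ : ↥K := 1 - ζbig with hθ
  have hθint : IsIntegral ↥E θ := IsIntegral.of_finite _ _
  have hζmem : ζbig ∈ IntermediateField.adjoin ↥E {θ} := by
    have h1 : θ ∈ IntermediateField.adjoin ↥E {θ} :=
      IntermediateField.subset_adjoin _ _ rfl
    have h2 : ζbig = 1 - θ := by rw [hθ]; ring
    rw [h2]
    exact sub_mem (one_mem _) h1
  have hle : IntermediateField.adjoin ↥E {ζbig} ≤ IntermediateField.adjoin ↥E {θ} := by
    rw [IntermediateField.adjoin_le_iff]
    simpa using hζmem
  have hf1 : Module.finrank ↥E ↥(IntermediateField.adjoin ↥E {ζbig})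
      = Module.finrank ↥E ↥K := by
    rw [IntermediateField.adjoin.finrank hζint, hminbig, hgd, ← hfinK]
  have hmono : Module.finrank ↥E ↥(IntermediateField.adjoin ↥E {ζbig})
      ≤ Module.finrank ↥E ↥(IntermediateField.adjoin ↥E {θ}) :=
    Submodule.finrank_mono (R := ↥E) (M := ↥K)
      (s := (IntermediateField.adjoin ↥E {ζbig}).toSubmodule)
      (t := (IntermediateField.adjoin ↥E {θ}).toSubmodule)
      (fun x hx => hle hx)
  have htow2 : Module.finrank ↥E ↥(IntermediateField.adjoin ↥E {θ})
      * Module.finrank ↥(IntermediateField.adjoin ↥E {θ}) ↥K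
      = Module.finrank ↥E ↥K := Module.finrank_mul_finrank _ _ _
  have hDpos : 0 < Module.finrank ↥E ↥K := by
    rw [hfinK]
    exact Nat.totient_pos.mpr (pow_pos hlpos k)
  have hb1 : Module.finrank ↥(IntermediateField.adjoin ↥E {θ}) ↥K = 1 := by
    have h1 : Module.finrank ↥E ↥K ≤ Module.finrank ↥E ↥(IntermediateField.adjoin ↥E {θ}) := by
      rw [← hf1]; exact hmono
    set a := Module.finrank ↥E ↥(IntermediateField.adjoin ↥E {θ})
    set b := Module.finrank ↥(IntermediateField.adjoin ↥E {θ}) ↥K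
    set D := Module.finrank ↥E ↥K
    have hbne : b ≠ 0 := by
      intro h0
      rw [h0, mul_zero] at htow2
      omega
    have hble : a * 1 ≤ a * b := Nat.mul_le_mul_left a (by omega)
    rw [mul_one, htow2] at hble
    have : a = D := le_antisymm hble h1
    rw [this] at htow2
    exact Nat.eq_of_mul_eq_mul_left hDpos (by rw [htow2, mul_one])
  -- the polynomial for θ = 1 - ζ
  set q1 : Polynomial ↥E := C 1 - X with hq1
  have hq1' : q1 = -(X - C 1) := by rw [hq1]; ring
  have hq1deg : q1.natDegree = 1 := by rw [hq1', natDegree_neg, natDegree_X_sub_C]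
  have hq1lc : q1.leadingCoeff = -1 := by
    rw [hq1', leadingCoeff_neg, (monic_X_sub_C (1 : ↥E)).leadingCoeff]
  set h1p : Polynomial ↥E := C ((-1 : ↥E) ^ g.natDegree) * (g.comp q1) with hh
  have hne1pow : ((-1 : ↥E) ^ g.natDegree) ≠ 0 := pow_ne_zero _ (neg_ne_zero.mpr one_ne_zero)
  have hcompdeg : (g.comp q1).natDegree = g.natDegree := by
    rw [natDegree_comp, hq1deg, mul_one]
  have hcomplc : (g.comp q1).leadingCoeff = (-1 : ↥E) ^ g.natDegree := by
    rw [leadingCoeff_comp (by rw [hq1deg]; omega), hgmonic.leadingCoeff, one_mul, hq1lc]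
  have hhmonic : h1p.Monic := by
    rw [Monic, hh, leadingCoeff_mul, leadingCoeff_C, hcomplc, ← pow_add]
    exact Even.neg_one_pow ⟨_, rfl⟩
  have hhdeg : h1p.natDegree = g.natDegree := by
    rw [hh, natDegree_C_mul hne1pow, hcompdeg]
  have haevalθ : (Polynomial.aeval θ) h1p = 0 := by
    have hq1v : (Polynomial.aeval θ) q1 = ζbig := by
      rw [hq1, map_sub, aeval_C, aeval_X, map_one, hθ]
      ring
    have hgv : (Polynomial.aeval ζbig) g = 0 := by
      have := minpoly.aeval ↥E ζbig
      rwa [hminbig] at this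
    rw [hh, map_mul, aeval_comp, hq1v, hgv, mul_zero]
  have haD : Module.finrank ↥E ↥(IntermediateField.adjoin ↥E {θ})
      = Module.finrank ↥E ↥K := by
    have h0 := htow2
    rwa [hb1, mul_one] at h0
  have hdmθ : (minpoly ↥E θ).natDegree = g.natDegree := by
    rw [← IntermediateField.adjoin.finrank hθint, haD, hfinK, hgd]
  have hminθ : minpoly ↥E θ = h1p := by
    obtain ⟨q, hq⟩ := minpoly.dvd ↥E θ haevalθ
    have hmonoθ : (minpoly ↥E θ).Monic := minpoly.monic hθint
    have hqm : q.Monic := hmonoθ.of_mul_monic_left (by rwa [← hq])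
    have hdm2 := hmonoθ.natDegree_mul hqm
    rw [← hq, hhdeg, hdmθ] at hdm2
    have hq1e : q = 1 := hqm.natDegree_eq_zero.mp (by omega)
    rw [hq, hq1e, mul_one]
  have hcoeff0 : h1p.coeff 0 = (-1 : ↥E) ^ g.natDegree * g.eval 1 := by
    rw [coeff_zero_eq_eval_zero, hh, eval_mul, eval_C, eval_comp, hq1]
    simp
  have heval1 : g.eval 1 * (1 - β) = 1 - ζQ := by
    have h0 := congrArg (eval 1) hgmul
    simpa using h0
  have hβne1 : β ≠ 1 := by
    intro h0
    have h1 : zeta (p ^ n) ^ c = 1 := by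
      rw [← hβc, h0]
      simp
    rw [hprimP.zpow_eq_one_iff_dvd] at h1
    obtain ⟨t, ht⟩ := h1
    have h2 : ((p : ℤ)) ^ n * (t * ℓ - m) = 1 := by
      push_cast at ht
      linear_combination hm - (ℓ : ℤ) * ht
    have h3 : ((p : ℤ)) ^ n ∣ 1 := ⟨t * ℓ - m, h2.symm⟩
    have h4 := Int.le_of_dvd one_pos h3
    have h5 : (2 : ℤ) ≤ (p : ℤ) ^ n := by
      calc (2 : ℤ) ≤ (p : ℤ) := by exact_mod_cast hp.two_le
      _ ≤ (p : ℤ) ^ n := le_self_pow₀ (by exact_mod_cast hppos) (by omega)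
    linarith
  have hnorm : Algebra.norm ↥E θ = g.eval 1 := by
    have h0 : Algebra.norm ↥E θ
        = Algebra.norm ↥E (IntermediateField.AdjoinSimple.gen ↥E θ) ^
          Module.finrank ↥(IntermediateField.adjoin ↥E {θ}) ↥K :=
      Algebra.norm_eq_norm_adjoin ↥E θ
    rw [hb1, pow_one] at h0
    have h2 := Algebra.PowerBasis.norm_gen_eq_coeff_zero_minpoly
      (IntermediateField.adjoin.powerBasis hθint)
    rw [IntermediateField.adjoin.powerBasis_gen, IntermediateField.minpoly_gen, hminθ] at h2
    have hdim : (IntermediateField.adjoin.powerBasis hθint).dim = g.natDegree := by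
      show (minpoly ↥E θ).natDegree = g.natDegree
      exact hdmθ
    rw [hdim, hcoeff0, ← mul_assoc, ← pow_add] at h2
    rw [h0, h2, Even.neg_one_pow ⟨_, rfl⟩, one_mul]
  have h1βne : (1 : ↥E) - β ≠ 0 := sub_ne_zero.mpr (fun hh0 => hβne1 hh0.symm)
  rw [hnorm, eq_mul_inv_iff_mul_eq₀ h1βne]
  exact heval1
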